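/- arXiv:1801.05695 — 3 statements merged into one kernel-verified Lean document; each statement's English description precedes it below -/
import Mathlib

section
/- If R > 1, U ≥ 2, and s(u) > 0, t(u) > 0 for all u, then ∏_{u=1}^{U} (s(u)/R + t(u)) − ∏_{u=1}^{U} t(u) < (1/R) [ ∏_{u=1}^{U} (s(u) + t(u)) − ∏_{u=1}^{U} t(u) ]. -/
/-- If `R > 1`, `U ≥ 2`, and `s(u) > 0`, `t(u) > 0` for all `u`, then
`∏_u (s(u)/R + t(u)) − ∏_u t(u) < (1/R)[ ∏_u (s(u) + t(u)) − ∏_u t(u) ]`. -/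
theorem prod_div_variance_lt
    (U : ℕ) (hU : 2 ≤ U) (R : ℝ) (hR : 1 < R) (s t : Fin U → ℝ)
    (hs : ∀ u, 0 < s u) (ht : ∀ u, 0 < t u) :
    ∏ u, (s u / R + t u) - ∏ u, t u <
      (1 / R) * (∏ u, (s u + t u) - ∏ u, t u) := by
  haveI : NeZero U := ⟨by omega⟩
  have hR0 : (0:ℝ) < R := lt_trans one_pos hR
  have hRinv : (0:ℝ) < R⁻¹ := inv_pos.mpr hR0
  set P : Finset (Fin U) → ℝ :=
    fun A => (∏ u ∈ A, s u) * ∏ u ∈ Finset.univ \ A, t u with hP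
  have hPpos : ∀ A, 0 < P A := fun A =>
    mul_pos (Finset.prod_pos fun u _ => hs u) (Finset.prod_pos fun u _ => ht u)
  have h1 : ∏ u, (s u / R + t u) = ∑ A ∈ Finset.univ.powerset, R⁻¹ ^ A.card * P A := by
    rw [Finset.prod_add]
    refine Finset.sum_congr rfl fun A hA => ?_
    simp only [hP, div_eq_mul_inv, Finset.prod_mul_distrib, Finset.prod_const]
    ring
  have h2 : ∏ u, (s u + t u) = ∑ A ∈ Finset.univ.powerset, P A := by
    rw [Finset.prod_add]
  have h3 : ∏ u, t u = P ∅ := by simp [hP]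
  rw [h1, h2, h3, one_div, ← div_eq_inv_mul, lt_div_iff₀ hR0]
  have hmem : (∅ : Finset (Fin U)) ∈ Finset.univ.powerset := Finset.empty_mem_powerset _
  rw [← Finset.add_sum_erase _ (fun A => R⁻¹ ^ A.card * P A) hmem,
      ← Finset.add_sum_erase _ P hmem]
  simp only [Finset.card_empty, pow_zero, one_mul]
  rw [add_sub_cancel_left, add_sub_cancel_left, Finset.sum_mul]
  refine Finset.sum_lt_sum ?_ ?_
  · intro A hA
    have hne : A ≠ ∅ := (Finset.mem_erase.mp hA).1
    have hA1 : 1 ≤ A.card :=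
      Finset.card_pos.mpr (Finset.nonempty_iff_ne_empty.mpr hne)
    have hle : R⁻¹ ^ A.card ≤ R⁻¹ := by
      calc R⁻¹ ^ A.card ≤ R⁻¹ ^ 1 :=
            pow_le_pow_of_le_one hRinv.le (inv_le_one_of_one_le₀ hR.le) hA1
        _ = R⁻¹ := pow_one _
    calc R⁻¹ ^ A.card * P A * R ≤ R⁻¹ * P A * R := by
          have := hPpos A
          gcongr
      _ = P A := by field_simp
  · refine ⟨Finset.univ, Finset.mem_erase.mpr
      ⟨Finset.univ_nonempty.ne_empty, Finset.mem_powerset_self _⟩, ?_⟩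
    have hcard : (Finset.univ : Finset (Fin U)).card = U := by
      simp [Finset.card_univ]
    have hRU : R < R ^ U := by
      calc R = R ^ 1 := (pow_one R).symm
        _ < R ^ U := pow_lt_pow_right₀ hR (by omega)
    have hlt : R⁻¹ ^ U * R < 1 := by
      have h4 : R⁻¹ ^ U < R⁻¹ := by
        rw [inv_pow]
        exact (inv_lt_inv₀ (by positivity) hR0).mpr hRU
      calc R⁻¹ ^ U * R < R⁻¹ * R := by gcongr
        _ = 1 := inv_mul_cancel₀ hR0.ne'
    rw [hcard]
    calc R⁻¹ ^ U * P Finset.univ * R = (R⁻¹ ^ U * R) * P Finset.univ := by ring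
      _ < 1 * P Finset.univ := by
          have := hPpos Finset.univ
          gcongr
      _ = P Finset.univ := one_mul _
end

section
/- If R ≥ 2, U ≥ 2, and v(u) > 0 and ℓ(u) > 0 for all u, then the estimator L̂ = ∏_{u=1}^{U} [ (1/R) ∑_{r=1}^{R} L(u,r) ] has strictly smaller variance than the estimator L̃ = (1/R) ∑_{r=1}^{R} ∏_{u=1}^{U} L(u,r): Var[L̂] < Var[L̃]. -/
open MeasureTheory ProbabilityTheory

section AuxLemmas
variable {Ω : Type*} [MeasurableSpace Ω] {μ : Measure Ω} [IsProbabilityMeasure μ]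


lemma aux_iIndepFun_ae_eq {ι : Type*} {f g : ι → Ω → ℝ}
    (hf : iIndepFun f μ) (hfg : ∀ i, f i =ᵐ[μ] g i) :
    iIndepFun g μ := by
  rw [iIndepFun_iff_measure_inter_preimage_eq_mul] at hf ⊢
  intro S sets H
  have hae : ∀ i, (g i ⁻¹' sets i : Set Ω) =ᵐ[μ] (f i ⁻¹' sets i : Set Ω) := by
    intro i
    rw [Filter.eventuallyEq_set]
    filter_upwards [hfg i] with ω hω
    simp [Set.mem_preimage, hω]
  have h1 : μ (⋂ i ∈ S, g i ⁻¹' sets i) = μ (⋂ i ∈ S, f i ⁻¹' sets i) := by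
    refine measure_congr ?_
    rw [Filter.eventuallyEq_set]
    have h : ∀ᵐ ω ∂μ, ∀ j ∈ S, f j ω = g j ω :=
      (Filter.eventually_all_finset S).2 fun j _ => hfg j
    filter_upwards [h] with ω hω
    simp only [Set.mem_iInter, Set.mem_preimage]
    exact forall₂_congr fun j hj => by rw [hω j hj]
  rw [h1, hf S H]
  exact Finset.prod_congr rfl fun i _ => (measure_congr (hae i)).symm

lemma aux_integral_prod {ι : Type*} {f : ι → Ω → ℝ}
    (hind : iIndepFun f μ) (hmeas : ∀ i, Measurable (f i))
    (hint : ∀ i, Integrable (f i) μ) (s : Finset ι) :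
    Integrable (fun ω => ∏ i ∈ s, f i ω) μ ∧
      (∫ ω, ∏ i ∈ s, f i ω ∂μ) = ∏ i ∈ s, ∫ ω, f i ω ∂μ := by
  classical
  induction s using Finset.induction_on with
  | empty => simp
  | @insert i s hi ih =>
    have hprodfun : (∏ j ∈ s, f j) = fun ω => ∏ j ∈ s, f j ω := by
      ext ω; simp [Finset.prod_apply]
    have hd : IndepFun (f i) (fun ω => ∏ j ∈ s, f j ω) μ := by
      have := (hind.indepFun_finset_prod_of_notMem hmeas hi).symm
      rwa [hprodfun] at this
    have hInt : Integrable (fun ω => f i ω * ∏ j ∈ s, f j ω) μ :=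
      hd.integrable_mul (hint i) ih.1
    constructor
    · simpa [Finset.prod_insert hi] using hInt
    · calc (∫ ω, ∏ j ∈ insert i s, f j ω ∂μ)
          = integral μ (f i * fun ω => ∏ j ∈ s, f j ω) := by
            congr 1; ext ω; simp [Finset.prod_insert hi]
        _ = (∫ ω, f i ω ∂μ) * ∫ ω, ∏ j ∈ s, f j ω ∂μ :=
            hd.integral_mul_eq_mul_integral (hint i).aestronglyMeasurable ih.1.aestronglyMeasurable
        _ = ∏ j ∈ insert i s, ∫ ω, f j ω ∂μ := by rw [ih.2, Finset.prod_insert hi]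

lemma aux_integral_prod_pow {ι : Type*} [Fintype ι] {f : ι → Ω → ℝ}
    (hind : iIndepFun f μ) (hmeas : ∀ i, Measurable (f i))
    (h2 : ∀ i, MemLp (f i) 2 μ) (m : ι → ℕ) (hm : ∀ i, m i ≤ 2) :
    Integrable (fun ω => ∏ i, f i ω ^ m i) μ ∧
      (∫ ω, ∏ i, f i ω ^ m i ∂μ) = ∏ i, ∫ ω, f i ω ^ m i ∂μ := by
  have hind' : iIndepFun (fun i ω => f i ω ^ m i) μ :=
    hind.comp (fun i x => x ^ m i) (fun i => measurable_id.pow_const (m i))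
  have hmeas' : ∀ i, Measurable (fun ω => f i ω ^ m i) :=
    fun i => (hmeas i).pow_const (m i)
  have hint' : ∀ i, Integrable (fun ω => f i ω ^ m i) μ := by
    intro i
    have : m i = 0 ∨ m i = 1 ∨ m i = 2 := by have := hm i; omega
    rcases this with h | h | h <;> rw [h]
    · simp only [pow_zero]; exact integrable_const (1 : ℝ)
    · simpa using (h2 i).integrable one_le_two
    · exact (h2 i).integrable_sq
  exact aux_integral_prod hind' hmeas' hint' Finset.univ


lemma aux_key_le {n : ℕ} (a b : Fin n → ℝ) (ha : ∀ u, 0 < a u) (hb : ∀ u, 0 < b u)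
    (R : ℝ) (hR : 2 ≤ R) (s : Finset (Fin n)) (hs : s.Nonempty) :
    R * ∏ u ∈ s, (a u + b u) ≤ ∏ u ∈ s, (a u + R * b u) + (R - 1) * ∏ u ∈ s, a u := by
  classical
  induction s using Finset.induction_on with
  | empty => exact absurd hs (by simp)
  | @insert x s hx ih =>
    rcases s.eq_empty_or_nonempty with rfl | hs'
    · simp only [Finset.prod_insert (Finset.notMem_empty x), Finset.prod_empty, mul_one]
      nlinarith [ha x, hb x]
    · have hBC : ∏ u ∈ s, a u ≤ ∏ u ∈ s, (a u + R * b u) :=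
        Finset.prod_le_prod (fun u _ => (ha u).le)
          (fun u _ => by nlinarith [ha u, hb u])
      have hCpos : 0 < ∏ u ∈ s, a u := Finset.prod_pos fun u _ => ha u
      have hstep := ih hs'
      rw [Finset.prod_insert hx, Finset.prod_insert hx, Finset.prod_insert hx]
      have habx : 0 < a x + b x := by nlinarith [ha x, hb x]
      calc R * ((a x + b x) * ∏ u ∈ s, (a u + b u))
          = (a x + b x) * (R * ∏ u ∈ s, (a u + b u)) := by ring
        _ ≤ (a x + b x) * (∏ u ∈ s, (a u + R * b u) + (R - 1) * ∏ u ∈ s, a u) :=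
            mul_le_mul_of_nonneg_left hstep habx.le
        _ ≤ (a x + R * b x) * ∏ u ∈ s, (a u + R * b u)
              + (R - 1) * (a x * ∏ u ∈ s, a u) := by
            nlinarith [mul_nonneg (mul_nonneg (by linarith : (0:ℝ) ≤ R - 1) (hb x).le)
              (sub_nonneg.2 hBC)]

lemma aux_key_ineq {n : ℕ} (hn : 2 ≤ n) (a b : Fin n → ℝ) (ha : ∀ u, 0 < a u)
    (hb : ∀ u, 0 < b u) (R : ℝ) (hR : 2 ≤ R) :
    R * ∏ u, (a u + b u) < ∏ u, (a u + R * b u) + (R - 1) * ∏ u, a u := by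
  classical
  have h0 : (0:ℕ) < n := by omega
  have h1 : (1:ℕ) < n := by omega
  set u0 : Fin n := ⟨0, h0⟩
  set u1 : Fin n := ⟨1, h1⟩
  set t : Finset (Fin n) := Finset.univ.erase u0 with ht
  have hu1t : u1 ∈ t := Finset.mem_erase.2 ⟨by simp [u0, u1, Fin.ext_iff], Finset.mem_univ _⟩
  have htne : t.Nonempty := ⟨u1, hu1t⟩
  have hins : (Finset.univ : Finset (Fin n)) = insert u0 t :=
    (Finset.insert_erase (Finset.mem_univ u0)).symm
  have hBC : ∏ u ∈ t, a u < ∏ u ∈ t, (a u + R * b u) :=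
    Finset.prod_lt_prod_of_nonempty (fun u _ => ha u)
      (fun u _ => by nlinarith [ha u, hb u]) htne
  have hCpos : 0 < ∏ u ∈ t, a u := Finset.prod_pos fun u _ => ha u
  have hstep := aux_key_le a b ha hb R hR t htne
  rw [hins, Finset.prod_insert (Finset.notMem_erase _ _),
    Finset.prod_insert (Finset.notMem_erase _ _), Finset.prod_insert (Finset.notMem_erase _ _)]
  have habx : 0 < a u0 + b u0 := by nlinarith [ha u0, hb u0]
  calc R * ((a u0 + b u0) * ∏ u ∈ t, (a u + b u))
      = (a u0 + b u0) * (R * ∏ u ∈ t, (a u + b u)) := by ring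
    _ ≤ (a u0 + b u0) * (∏ u ∈ t, (a u + R * b u) + (R - 1) * ∏ u ∈ t, a u) :=
        mul_le_mul_of_nonneg_left hstep habx.le
    _ < (a u0 + R * b u0) * ∏ u ∈ t, (a u + R * b u)
          + (R - 1) * (a u0 * ∏ u ∈ t, a u) := by
        nlinarith [mul_pos (mul_pos (by linarith : (0:ℝ) < R - 1) (hb u0))
          (sub_pos.2 hBC)]
end AuxLemmas

/-- If `R ≥ 2`, `U ≥ 2`, and `v(u) > 0`, `ℓ(u) > 0` for all `u`, then the estimator
`L̂ = ∏_u [(1/R) ∑_r L(u,r)]` has strictly smaller variance than the estimator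
`L̃ = (1/R) ∑_r ∏_u L(u,r)`: `Var[L̂] < Var[L̃]`. -/
theorem variance_product_of_averages_lt_variance_average_of_products
    {Ω : Type*} [MeasurableSpace Ω] (μ : Measure Ω) [IsProbabilityMeasure μ]
    (U R : ℕ) (hU : 2 ≤ U) (hR : 2 ≤ R)
    (L : Fin U × Fin R → Ω → ℝ) (ℓ v : Fin U → ℝ)
    (hIndep : iIndepFun L μ)
    (hL2 : ∀ p, MemLp (L p) 2 μ)
    (hmean : ∀ p, μ[L p] = ℓ p.1)
    (hvar : ∀ p, variance (L p) μ = v p.1)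
    (hℓ : ∀ u, 0 < ℓ u) (hv : ∀ u, 0 < v u) :
    variance (fun ω => ∏ u, ((1 / (R : ℝ)) * ∑ r, L (u, r) ω)) μ <
      variance (fun ω => (1 / (R : ℝ)) * ∑ r, ∏ u, L (u, r) ω) μ := by
  classical
  have hR2 : (2:ℝ) ≤ (R:ℝ) := by exact_mod_cast hR
  have hRpos : (0:ℝ) < (R:ℝ) := by linarith
  have hRne : (R:ℝ) ≠ 0 := ne_of_gt hRpos
  set c : ℝ := 1 / (R:ℝ) with hc
  -- measurable modifications
  have hfK : ∀ p : Fin U × Fin R, ∃ g : Ω → ℝ, Measurable g ∧ L p =ᵐ[μ] g := fun p =>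
    ⟨(hL2 p).aestronglyMeasurable.mk (L p),
     (hL2 p).aestronglyMeasurable.stronglyMeasurable_mk.measurable,
     (hL2 p).aestronglyMeasurable.ae_eq_mk⟩
  choose f hfmeas hfeq using hfK
  have hf2 : ∀ p, MemLp (f p) 2 μ := fun p => (hL2 p).ae_eq (hfeq p)
  have hfind : iIndepFun f μ := aux_iIndepFun_ae_eq hIndep hfeq
  have hfmean : ∀ p, (∫ ω, f p ω ∂μ) = ℓ p.1 := fun p => by
    rw [← integral_congr_ae (hfeq p)]; exact hmean p
  have hfsq : ∀ p, (∫ ω, f p ω ^ 2 ∂μ) = v p.1 + ℓ p.1 ^ 2 := by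
    intro p
    have h := variance_eq_sub (hL2 p)
    rw [hvar p, hmean p] at h
    simp only [Pi.pow_apply] at h
    have h2 : (∫ ω, f p ω ^ 2 ∂μ) = ∫ ω, L p ω ^ 2 ∂μ :=
      (integral_congr_ae ((hfeq p).mono fun ω hω => by rw [hω])).symm
    rw [h2]; linarith
  -- key identities
  have hident : ∀ (a : Fin U → Fin R) (ω : Ω),
      (∏ u, f (u, a u) ω) =
        ∏ p : Fin U × Fin R, f p ω ^ (if p.2 = a p.1 then 1 else 0) := by
    intro a ω
    rw [Fintype.prod_prod_type]
    refine Finset.prod_congr rfl fun u _ => ?_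
    have h1 : (∏ r : Fin R, f (u, r) ω ^ (if r = a u then 1 else 0)) =
        ∏ r : Fin R, (if r = a u then f (u, r) ω else 1) := by
      refine Finset.prod_congr rfl fun r _ => ?_
      split_ifs <;> simp
    rw [h1, Finset.prod_ite_eq' Finset.univ (a u) fun r => f (u, r) ω]
    simp
  have hident2 : ∀ (A B : Fin U → Fin R) (ω : Ω),
      (∏ u, (f (u, A u) ω * f (u, B u) ω)) =
        ∏ p : Fin U × Fin R, f p ω ^
          ((if p.2 = A p.1 then 1 else 0) + (if p.2 = B p.1 then 1 else 0)) := by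
    intro A B ω
    rw [Finset.prod_mul_distrib, hident A ω, hident B ω, ← Finset.prod_mul_distrib]
    exact Finset.prod_congr rfl fun p _ => (pow_add _ _ _).symm
  -- expectation of a product along a selection
  have compB : ∀ a : Fin U → Fin R,
      Integrable (fun ω => ∏ u, f (u, a u) ω) μ ∧
        (∫ ω, ∏ u, f (u, a u) ω ∂μ) = ∏ u, ℓ u := by
    intro a
    set m : Fin U × Fin R → ℕ := fun p => if p.2 = a p.1 then 1 else 0 with hm
    have hm2 : ∀ p, m p ≤ 2 := fun p => by simp only [hm]; split_ifs <;> omega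
    obtain ⟨hInt, hEq⟩ := aux_integral_prod_pow hfind hfmeas hf2 m hm2
    have heq1 : (fun ω => ∏ u, f (u, a u) ω) = fun ω => ∏ p, f p ω ^ m p :=
      funext fun ω => hident a ω
    refine ⟨heq1 ▸ hInt, ?_⟩
    calc (∫ ω, ∏ u, f (u, a u) ω ∂μ)
        = ∫ ω, ∏ p, f p ω ^ m p ∂μ := by rw [heq1]
      _ = ∏ p, ∫ ω, f p ω ^ m p ∂μ := hEq
      _ = ∏ u, ℓ u := by
          rw [Fintype.prod_prod_type]
          refine Finset.prod_congr rfl fun u _ => ?_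
          have h1 : (∏ r : Fin R, ∫ ω, f (u, r) ω ^ m (u, r) ∂μ) =
              ∏ r : Fin R, (if r = a u then ℓ u else 1) := by
            refine Finset.prod_congr rfl fun r _ => ?_
            simp only [hm]
            split_ifs with h
            · simp only [pow_one]; exact hfmean (u, r)
            · simp
          rw [h1, Finset.prod_ite_eq' Finset.univ (a u) fun _ => ℓ u]
          simp
  -- expectation of a product along two selections
  have compA : ∀ A B : Fin U → Fin R,
      Integrable (fun ω => ∏ u, (f (u, A u) ω * f (u, B u) ω)) μ ∧
        (∫ ω, ∏ u, (f (u, A u) ω * f (u, B u) ω) ∂μ)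
          = ∏ u, (if A u = B u then v u + ℓ u ^ 2 else ℓ u ^ 2) := by
    intro A B
    set m : Fin U × Fin R → ℕ :=
      fun p => (if p.2 = A p.1 then 1 else 0) + (if p.2 = B p.1 then 1 else 0) with hm
    have hm2 : ∀ p, m p ≤ 2 := fun p => by simp only [hm]; split_ifs <;> omega
    obtain ⟨hInt, hEq⟩ := aux_integral_prod_pow hfind hfmeas hf2 m hm2
    have heq1 : (fun ω => ∏ u, (f (u, A u) ω * f (u, B u) ω)) = fun ω => ∏ p, f p ω ^ m p :=
      funext fun ω => hident2 A B ω
    refine ⟨heq1 ▸ hInt, ?_⟩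
    calc (∫ ω, ∏ u, (f (u, A u) ω * f (u, B u) ω) ∂μ)
        = ∫ ω, ∏ p, f p ω ^ m p ∂μ := by rw [heq1]
      _ = ∏ p, ∫ ω, f p ω ^ m p ∂μ := hEq
      _ = ∏ u, (if A u = B u then v u + ℓ u ^ 2 else ℓ u ^ 2) := by
          rw [Fintype.prod_prod_type]
          refine Finset.prod_congr rfl fun u _ => ?_
          by_cases hAB : A u = B u
          · have h1 : (∏ r : Fin R, ∫ ω, f (u, r) ω ^ m (u, r) ∂μ) =
                ∏ r : Fin R, (if r = A u then v u + ℓ u ^ 2 else 1) := by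
              refine Finset.prod_congr rfl fun r _ => ?_
              simp only [hm]
              rw [← hAB]
              split_ifs with h
              · exact hfsq (u, r)
              · simp
            rw [h1, Finset.prod_ite_eq' Finset.univ (A u) fun _ => v u + ℓ u ^ 2]
            simp [hAB]
          · have h1 : (∏ r : Fin R, ∫ ω, f (u, r) ω ^ m (u, r) ∂μ) =
                ∏ r : Fin R, ((if r = A u then ℓ u else 1) * (if r = B u then ℓ u else 1)) := by
              refine Finset.prod_congr rfl fun r _ => ?_
              simp only [hm]
              by_cases h1 : r = A u <;> by_cases h2 : r = B u
              · exact absurd (h1.symm.trans h2) hAB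
              · rw [if_pos h1, if_pos h1, if_neg h2, if_neg h2]
                simp only [add_zero, pow_one, mul_one]
                exact hfmean (u, r)
              · rw [if_neg h1, if_neg h1, if_pos h2, if_pos h2]
                simp only [zero_add, pow_one, one_mul]
                exact hfmean (u, r)
              · rw [if_neg h1, if_neg h1, if_neg h2, if_neg h2]
                simp
            rw [h1, Finset.prod_mul_distrib,
              Finset.prod_ite_eq' Finset.univ (A u) fun _ => ℓ u,
              Finset.prod_ite_eq' Finset.univ (B u) fun _ => ℓ u]
            simp [hAB, sq]
  -- expansions of the two estimators
  have expand1 : ∀ ω, (∏ u, (c * ∑ r, f (u, r) ω)) =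
      c ^ U * ∑ a : Fin U → Fin R, ∏ u, f (u, a u) ω := by
    intro ω
    rw [Finset.prod_mul_distrib, Finset.prod_const, Finset.card_univ, Fintype.card_fin]
    congr 1
    rw [Finset.prod_univ_sum, Fintype.piFinset_univ]
  have expand2 : ∀ ω, (∏ u, (c * ∑ r, f (u, r) ω)) ^ 2 =
      c ^ (U * 2) * ∑ a : Fin U → Fin R, ∑ b : Fin U → Fin R,
        ∏ u, (f (u, a u) ω * f (u, b u) ω) := by
    intro ω
    rw [expand1 ω, mul_pow, ← pow_mul]
    congr 1
    rw [pow_two, Finset.sum_mul_sum]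
    exact Finset.sum_congr rfl fun a _ => Finset.sum_congr rfl fun b _ =>
      Finset.prod_mul_distrib.symm
  have expandT : ∀ ω, (c * ∑ r, ∏ u, f (u, r) ω) ^ 2 =
      c ^ 2 * ∑ r : Fin R, ∑ r' : Fin R, ∏ u, (f (u, r) ω * f (u, r') ω) := by
    intro ω
    rw [mul_pow]
    congr 1
    rw [pow_two, Finset.sum_mul_sum]
    exact Finset.sum_congr rfl fun r _ => Finset.sum_congr rfl fun r' _ =>
      Finset.prod_mul_distrib.symm
  -- integrals of the measurable versions
  have hIhat : (∫ ω, ∏ u, (c * ∑ r, f (u, r) ω) ∂μ) = ∏ u, ℓ u := by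
    calc (∫ ω, ∏ u, (c * ∑ r, f (u, r) ω) ∂μ)
        = ∫ ω, c ^ U * ∑ a : Fin U → Fin R, ∏ u, f (u, a u) ω ∂μ :=
          integral_congr_ae (Filter.Eventually.of_forall expand1)
      _ = c ^ U * ∑ a : Fin U → Fin R, ∫ ω, ∏ u, f (u, a u) ω ∂μ := by
          rw [integral_const_mul, integral_finset_sum _ fun a _ => (compB a).1]
      _ = c ^ U * ∑ a : Fin U → Fin R, ∏ u, ℓ u := by
          congr 1; exact Finset.sum_congr rfl fun a _ => (compB a).2
      _ = ∏ u, ℓ u := by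
          rw [Finset.sum_const, Finset.card_univ, Fintype.card_fun, Fintype.card_fin,
            Fintype.card_fin, nsmul_eq_mul]
          push_cast
          rw [hc, div_pow, one_pow, ← mul_assoc]
          field_simp
  have hIhat2 : (∫ ω, (∏ u, (c * ∑ r, f (u, r) ω)) ^ 2 ∂μ) =
      ∏ u, (ℓ u ^ 2 + v u / R) := by
    calc (∫ ω, (∏ u, (c * ∑ r, f (u, r) ω)) ^ 2 ∂μ)
        = ∫ ω, c ^ (U * 2) * ∑ a : Fin U → Fin R, ∑ b : Fin U → Fin R,
            ∏ u, (f (u, a u) ω * f (u, b u) ω) ∂μ :=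
          integral_congr_ae (Filter.Eventually.of_forall expand2)
      _ = c ^ (U * 2) * ∑ a : Fin U → Fin R, ∑ b : Fin U → Fin R,
            ∫ ω, ∏ u, (f (u, a u) ω * f (u, b u) ω) ∂μ := by
          rw [integral_const_mul,
            integral_finset_sum _ fun a _ =>
              integrable_finset_sum _ fun b _ => (compA a b).1]
          congr 1
          exact Finset.sum_congr rfl fun a _ =>
            integral_finset_sum _ fun b _ => (compA a b).1
      _ = c ^ (U * 2) * ∑ a : Fin U → Fin R, ∑ b : Fin U → Fin R,
            ∏ u, (if a u = b u then v u + ℓ u ^ 2 else ℓ u ^ 2) := by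
          congr 1
          exact Finset.sum_congr rfl fun a _ =>
            Finset.sum_congr rfl fun b _ => (compA a b).2
      _ = c ^ (U * 2) * ∑ a : Fin U → Fin R, ∏ u, (v u + (R:ℝ) * ℓ u ^ 2) := by
          congr 1
          refine Finset.sum_congr rfl fun a _ => ?_
          calc (∑ b : Fin U → Fin R, ∏ u, (if a u = b u then v u + ℓ u ^ 2 else ℓ u ^ 2))
              = ∏ u, ∑ r' : Fin R, (if a u = r' then v u + ℓ u ^ 2 else ℓ u ^ 2) := by
                rw [Finset.prod_univ_sum, Fintype.piFinset_univ]
            _ = ∏ u, (v u + (R:ℝ) * ℓ u ^ 2) := by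
                refine Finset.prod_congr rfl fun u _ => ?_
                calc (∑ r' : Fin R, if a u = r' then v u + ℓ u ^ 2 else ℓ u ^ 2)
                    = ∑ r' : Fin R, ((if a u = r' then v u else 0) + ℓ u ^ 2) := by
                      refine Finset.sum_congr rfl fun r' _ => ?_
                      split_ifs <;> ring
                  _ = v u + (R:ℝ) * ℓ u ^ 2 := by
                      rw [Finset.sum_add_distrib, Finset.sum_ite_eq Finset.univ (a u)
                        fun _ => v u, Finset.sum_const, Finset.card_univ, Fintype.card_fin,
                        nsmul_eq_mul]
                      simp
      _ = ∏ u, (ℓ u ^ 2 + v u / R) := by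
          rw [Finset.sum_const, Finset.card_univ, Fintype.card_fun, Fintype.card_fin,
            Fintype.card_fin, nsmul_eq_mul]
          push_cast
          have hsplit : c ^ (U * 2) * ((R:ℝ) ^ U * ∏ u, (v u + (R:ℝ) * ℓ u ^ 2)) =
              ∏ u, (c ^ 2 * ((R:ℝ) * (v u + (R:ℝ) * ℓ u ^ 2))) := by
            rw [Finset.prod_mul_distrib, Finset.prod_mul_distrib, Finset.prod_const,
              Finset.prod_const, Finset.card_univ, Fintype.card_fin, ← pow_mul]
            ring
          rw [hsplit]
          refine Finset.prod_congr rfl fun u _ => ?_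
          rw [hc]
          field_simp
          ring
  have hITil : (∫ ω, c * ∑ r, ∏ u, f (u, r) ω ∂μ) = ∏ u, ℓ u := by
    rw [integral_const_mul, integral_finset_sum _ fun r _ => (compB fun _ => r).1]
    calc c * ∑ r : Fin R, ∫ ω, ∏ u, f (u, r) ω ∂μ
        = c * ∑ r : Fin R, ∏ u, ℓ u := by
          congr 1; exact Finset.sum_congr rfl fun r _ => (compB fun _ => r).2
      _ = ∏ u, ℓ u := by
          rw [Finset.sum_const, Finset.card_univ, Fintype.card_fin, nsmul_eq_mul, hc]
          field_simp
  have hITil2 : (∫ ω, (c * ∑ r, ∏ u, f (u, r) ω) ^ 2 ∂μ) =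
      c ^ 2 * ((R:ℝ) * (∏ u, (v u + ℓ u ^ 2) + ((R:ℝ) - 1) * ∏ u, ℓ u ^ 2)) := by
    calc (∫ ω, (c * ∑ r, ∏ u, f (u, r) ω) ^ 2 ∂μ)
        = ∫ ω, c ^ 2 * ∑ r : Fin R, ∑ r' : Fin R, ∏ u, (f (u, r) ω * f (u, r') ω) ∂μ :=
          integral_congr_ae (Filter.Eventually.of_forall expandT)
      _ = c ^ 2 * ∑ r : Fin R, ∑ r' : Fin R,
            ∫ ω, ∏ u, (f (u, r) ω * f (u, r') ω) ∂μ := by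
          rw [integral_const_mul,
            integral_finset_sum _ fun r _ =>
              integrable_finset_sum _ fun r' _ => (compA (fun _ => r) (fun _ => r')).1]
          congr 1
          exact Finset.sum_congr rfl fun r _ =>
            integral_finset_sum _ fun r' _ => (compA (fun _ => r) (fun _ => r')).1
      _ = c ^ 2 * ∑ r : Fin R, ∑ r' : Fin R,
            (if r = r' then ∏ u, (v u + ℓ u ^ 2) else ∏ u, ℓ u ^ 2) := by
          congr 1
          refine Finset.sum_congr rfl fun r _ => Finset.sum_congr rfl fun r' _ => ?_
          rw [(compA (fun _ => r) (fun _ => r')).2]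
          by_cases h : r = r' <;> simp [h]
      _ = c ^ 2 * ((R:ℝ) * (∏ u, (v u + ℓ u ^ 2) + ((R:ℝ) - 1) * ∏ u, ℓ u ^ 2)) := by
          congr 1
          have hinner : ∀ r : Fin R,
              (∑ r' : Fin R, if r = r' then ∏ u, (v u + ℓ u ^ 2) else ∏ u, ℓ u ^ 2) =
                ∏ u, (v u + ℓ u ^ 2) + ((R:ℝ) - 1) * ∏ u, ℓ u ^ 2 := by
            intro r
            calc (∑ r' : Fin R, if r = r' then ∏ u, (v u + ℓ u ^ 2) else ∏ u, ℓ u ^ 2)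
                = ∑ r' : Fin R, ((if r = r' then (∏ u, (v u + ℓ u ^ 2)) - ∏ u, ℓ u ^ 2 else 0)
                    + ∏ u, ℓ u ^ 2) := by
                  refine Finset.sum_congr rfl fun r' _ => ?_
                  split_ifs <;> ring
              _ = ∏ u, (v u + ℓ u ^ 2) + ((R:ℝ) - 1) * ∏ u, ℓ u ^ 2 := by
                  rw [Finset.sum_add_distrib, Finset.sum_ite_eq Finset.univ r
                    (fun _ => (∏ u, (v u + ℓ u ^ 2)) - ∏ u, ℓ u ^ 2), Finset.sum_const,
                    Finset.card_univ, Fintype.card_fin, nsmul_eq_mul]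
                  simp only [Finset.mem_univ, if_true]
                  ring
          rw [Finset.sum_congr rfl fun r _ => hinner r, Finset.sum_const, Finset.card_univ,
            Fintype.card_fin, nsmul_eq_mul]
  -- measurability and square-integrability of the estimators
  have hHatMeas : Measurable (fun ω => ∏ u, (c * ∑ r, f (u, r) ω)) :=
    Finset.measurable_prod _ fun u _ =>
      measurable_const.mul (Finset.measurable_sum _ fun r _ => hfmeas (u, r))
  have hTilMeas : Measurable (fun ω => c * ∑ r, ∏ u, f (u, r) ω) :=
    measurable_const.mul (Finset.measurable_sum _ fun r _ =>
      Finset.measurable_prod _ fun u _ => hfmeas (u, r))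
  have hHatSqInt : Integrable (fun ω => (∏ u, (c * ∑ r, f (u, r) ω)) ^ 2) μ := by
    rw [show (fun ω => (∏ u, (c * ∑ r, f (u, r) ω)) ^ 2) =
        fun ω => c ^ (U * 2) * ∑ a : Fin U → Fin R, ∑ b : Fin U → Fin R,
          ∏ u, (f (u, a u) ω * f (u, b u) ω) from funext expand2]
    exact (integrable_finset_sum _ fun a _ =>
      integrable_finset_sum _ fun b _ => (compA a b).1).const_mul _
  have hTilSqInt : Integrable (fun ω => (c * ∑ r, ∏ u, f (u, r) ω) ^ 2) μ := by
    rw [show (fun ω => (c * ∑ r, ∏ u, f (u, r) ω) ^ 2) =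
        fun ω => c ^ 2 * ∑ r : Fin R, ∑ r' : Fin R,
          ∏ u, (f (u, r) ω * f (u, r') ω) from funext expandT]
    exact (integrable_finset_sum _ fun r _ =>
      integrable_finset_sum _ fun r' _ => (compA (fun _ => r) (fun _ => r')).1).const_mul _
  have hHatMem : MemLp (fun ω => ∏ u, (c * ∑ r, f (u, r) ω)) 2 μ :=
    (memLp_two_iff_integrable_sq hHatMeas.aestronglyMeasurable).2 hHatSqInt
  have hTilMem : MemLp (fun ω => c * ∑ r, ∏ u, f (u, r) ω) 2 μ :=
    (memLp_two_iff_integrable_sq hTilMeas.aestronglyMeasurable).2 hTilSqInt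
  -- a.e. identification with the original estimators
  have hall : ∀ᵐ ω ∂μ, ∀ p : Fin U × Fin R, L p ω = f p ω :=
    (MeasureTheory.ae_all_iff).2 fun p => hfeq p
  have hXhat_eq : (fun ω => ∏ u, ((1 / (R : ℝ)) * ∑ r, L (u, r) ω)) =ᵐ[μ]
      (fun ω => ∏ u, (c * ∑ r, f (u, r) ω)) := by
    filter_upwards [hall] with ω hω
    refine Finset.prod_congr rfl fun u _ => ?_
    rw [hc]
    congr 1
    exact Finset.sum_congr rfl fun r _ => hω (u, r)
  have hXtil_eq : (fun ω => (1 / (R : ℝ)) * ∑ r, ∏ u, L (u, r) ω) =ᵐ[μ]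
      (fun ω => c * ∑ r, ∏ u, f (u, r) ω) := by
    filter_upwards [hall] with ω hω
    rw [hc]
    congr 1
    exact Finset.sum_congr rfl fun r _ => Finset.prod_congr rfl fun u _ => hω (u, r)
  -- variance computations
  have hVarHat : variance (fun ω => ∏ u, ((1 / (R : ℝ)) * ∑ r, L (u, r) ω)) μ =
      (∏ u, (ℓ u ^ 2 + v u / R)) - (∏ u, ℓ u) ^ 2 := by
    rw [variance_eq_sub (hHatMem.ae_eq hXhat_eq.symm)]
    simp only [Pi.pow_apply]
    rw [integral_congr_ae (hXhat_eq.mono fun ω hω => congrArg (· ^ 2) hω),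
      integral_congr_ae hXhat_eq, hIhat2, hIhat]
  have hVarTil : variance (fun ω => (1 / (R : ℝ)) * ∑ r, ∏ u, L (u, r) ω) μ =
      c ^ 2 * ((R:ℝ) * (∏ u, (v u + ℓ u ^ 2) + ((R:ℝ) - 1) * ∏ u, ℓ u ^ 2))
        - (∏ u, ℓ u) ^ 2 := by
    rw [variance_eq_sub (hTilMem.ae_eq hXtil_eq.symm)]
    simp only [Pi.pow_apply]
    rw [integral_congr_ae (hXtil_eq.mono fun ω hω => congrArg (· ^ 2) hω),
      integral_congr_ae hXtil_eq, hITil2, hITil]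
  rw [hVarHat, hVarTil]
  -- the strict inequality
  have hkey := aux_key_ineq hU (fun u => ℓ u ^ 2) (fun u => v u / R)
    (fun u => pow_pos (hℓ u) 2) (fun u => div_pos (hv u) hRpos) (R:ℝ) hR2
  have hprodeq : (∏ u, (ℓ u ^ 2 + (R:ℝ) * (v u / R))) = ∏ u, (ℓ u ^ 2 + v u) := by
    refine Finset.prod_congr rfl fun u _ => ?_
    rw [mul_div_cancel₀ _ hRne]
  have hkey2 : (R:ℝ) * ∏ u, (ℓ u ^ 2 + v u / R) <
      ∏ u, (ℓ u ^ 2 + (R:ℝ) * (v u / R)) + ((R:ℝ) - 1) * ∏ u, ℓ u ^ 2 := hkey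
  have hQ : (∏ u, ℓ u ^ 2) = (∏ u, ℓ u) ^ 2 := Finset.prod_pow _ _ _
  have hcomm : (∏ u, (v u + ℓ u ^ 2)) = ∏ u, (ℓ u ^ 2 + v u) := by
    refine Finset.prod_congr rfl fun u _ => by ring
  rw [hprodeq, hQ] at hkey2
  rw [hcomm, hQ]
  have hRHS : c ^ 2 * ((R:ℝ) * (∏ u, (ℓ u ^ 2 + v u) + ((R:ℝ) - 1) * (∏ u, ℓ u) ^ 2)) =
      (∏ u, (ℓ u ^ 2 + v u) + ((R:ℝ) - 1) * (∏ u, ℓ u) ^ 2) / R := by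
    rw [hc]
    field_simp
  rw [hRHS]
  have h2 : (∏ u, (ℓ u ^ 2 + v u / R)) <
      (∏ u, (ℓ u ^ 2 + v u) + ((R:ℝ) - 1) * (∏ u, ℓ u) ^ 2) / R := by
    rw [lt_div_iff₀ hRpos]
    nlinarith [hkey2]
  linarith
end

section
/- In the constant-parameter case where ℓ(u) = ℓ• and v(u) = s for all u = 1,…,U, the variances of the two combined likelihood estimators are Var[L̃] = (1/R) [ (s + ℓ•²)^U − ℓ•^{2U} ] and Var[L̂] = (s/R + ℓ•²)^U − ℓ•^{2U}. -/
open MeasureTheory ProbabilityTheory Finset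

section Aux

variable {Ω : Type*} [MeasurableSpace Ω] {μ : Measure Ω}

lemma my_variance_congr {X Y : Ω → ℝ} (h : X =ᵐ[μ] Y) :
    variance X μ = variance Y μ := by
  have hint : μ[X] = μ[Y] := integral_congr_ae h
  simp only [variance, evariance]
  rw [hint]
  congr 1
  apply lintegral_congr_ae
  filter_upwards [h] with ω hω
  rw [hω]

lemma my_iIndepFun_ae_congr {ι : Type*} {f g : ι → Ω → ℝ}
    (h : iIndepFun f μ) (hfg : ∀ i, f i =ᵐ[μ] g i) :
    iIndepFun g μ := by
  rw [iIndepFun_iff_measure_inter_preimage_eq_mul] at h ⊢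
  intro S sets hsets
  have hall : ∀ᵐ ω ∂μ, ∀ i ∈ S, f i ω = g i ω :=
    (MeasureTheory.ae_ball_iff S.countable_toSet).2 fun i _ => hfg i
  have h1 : ∀ i ∈ S, μ (g i ⁻¹' sets i) = μ (f i ⁻¹' sets i) := by
    intro i hi
    apply measure_congr
    filter_upwards [hfg i] with ω hω
    show (g i ω ∈ sets i) = (f i ω ∈ sets i)
    rw [hω]
  have h2 : μ (⋂ i ∈ S, g i ⁻¹' sets i) = μ (⋂ i ∈ S, f i ⁻¹' sets i) := by
    apply measure_congr
    filter_upwards [hall] with ω hω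
    show (ω ∈ ⋂ i ∈ S, g i ⁻¹' sets i) = (ω ∈ ⋂ i ∈ S, f i ⁻¹' sets i)
    simp only [Set.mem_iInter, Set.mem_preimage, eq_iff_iff]
    constructor
    · intro h' i hi; rw [hω i hi]; exact h' i hi
    · intro h' i hi; rw [← hω i hi]; exact h' i hi
  rw [h2, Finset.prod_congr rfl h1]
  exact h S hsets

lemma my_integral_prod_indep [IsProbabilityMeasure μ] {ι : Type*} (X : ι → Ω → ℝ)
    (hint : ∀ i, Integrable (X i) μ) (s : Finset ι)
    (hindep : ∀ (t : Finset ι) (j : ι), j ∉ t →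
      IndepFun (fun ω => ∏ i ∈ t, X i ω) (X j) μ) :
    Integrable (fun ω => ∏ i ∈ s, X i ω) μ ∧
      (∫ ω, ∏ i ∈ s, X i ω ∂μ) = ∏ i ∈ s, ∫ ω, X i ω ∂μ := by
  classical
  induction s using Finset.induction_on with
  | empty => simp
  | insert j t hj ih =>
    obtain ⟨ihint, ihval⟩ := ih
    have hIF := hindep t j hj
    have hkey : (fun ω => ∏ i ∈ insert j t, X i ω) =
        fun ω => (∏ i ∈ t, X i ω) * X j ω := by
      funext ω; rw [Finset.prod_insert hj, mul_comm]
    constructor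
    · rw [hkey]
      exact hIF.integrable_mul ihint (hint j)
    · rw [hkey, Finset.prod_insert hj]
      have := hIF.integral_mul_eq_mul_integral ihint.1 (hint j).1
      rw [show (∫ ω, (∏ i ∈ t, X i ω) * X j ω ∂μ) =
        integral μ ((fun ω => ∏ i ∈ t, X i ω) * X j) from rfl, this, ihval]
      ring

lemma my_variance_prod_indep [IsProbabilityMeasure μ] {ι : Type*} [Fintype ι] (X : ι → Ω → ℝ)
    (hX2 : ∀ i, MemLp (X i) 2 μ)
    (h1 : ∀ (t : Finset ι) (j : ι), j ∉ t →
      IndepFun (fun ω => ∏ i ∈ t, X i ω) (X j) μ)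
    (h2 : ∀ (t : Finset ι) (j : ι), j ∉ t →
      IndepFun (fun ω => ∏ i ∈ t, (X i ω) ^ 2) (fun ω => (X j ω) ^ 2) μ) :
    MemLp (fun ω => ∏ i, X i ω) 2 μ ∧
    variance (fun ω => ∏ i, X i ω) μ =
      ∏ i, (variance (X i) μ + (∫ ω, X i ω ∂μ) ^ 2) - ∏ i, (∫ ω, X i ω ∂μ) ^ 2 := by
  have hint : ∀ i, Integrable (X i) μ := fun i => (hX2 i).integrable one_le_two
  have hintsq : ∀ i, Integrable (fun ω => X i ω ^ 2) μ := fun i => (hX2 i).integrable_sq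
  obtain ⟨Iprod, Eprod⟩ := my_integral_prod_indep X hint Finset.univ h1
  obtain ⟨Isq, Esq⟩ := my_integral_prod_indep (fun i ω => X i ω ^ 2) hintsq Finset.univ h2
  have hsq : ∀ ω, (∏ i, X i ω) ^ 2 = ∏ i, (X i ω) ^ 2 := by
    intro ω; rw [← Finset.prod_pow]
  have hmem : MemLp (fun ω => ∏ i, X i ω) 2 μ := by
    rw [memLp_two_iff_integrable_sq
      (Finset.aestronglyMeasurable_fun_prod _ fun i _ => (hX2 i).1)]
    simpa only [hsq] using Isq
  refine ⟨hmem, ?_⟩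
  rw [variance_eq_sub hmem]
  have e1 : μ[(fun ω => ∏ i, X i ω) ^ 2] = ∏ i, ∫ ω, X i ω ^ 2 ∂μ := by
    rw [show ((fun ω => ∏ i, X i ω) ^ 2) = fun ω => ∏ i, X i ω ^ 2 by
      funext ω; simp [hsq ω]]
    exact Esq
  rw [e1, Eprod]
  have e2 : ∀ i, ∫ ω, X i ω ^ 2 ∂μ = variance (X i) μ + (∫ ω, X i ω ∂μ) ^ 2 := by
    intro i
    have := variance_eq_sub (hX2 i)
    simp only [Pi.pow_apply] at this
    rw [this]; ring
  rw [Finset.prod_congr rfl fun i _ => e2 i, ← Finset.prod_pow]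

lemma my_grouped_indep {κ ι ρ : Type*} [Fintype ρ] (M : κ → Ω → ℝ)
    (hM : ∀ k, Measurable (M k))
    (hIndep : iIndepFun M μ)
    (g : ι → ρ → κ) (hg : Function.Injective (fun p : ι × ρ => g p.1 p.2))
    (φ : (ρ → ℝ) → ℝ) (hφ : Measurable φ)
    (t : Finset ι) (j : ι) (hj : j ∉ t) :
    IndepFun (fun ω => ∏ i ∈ t, φ (fun r => M (g i r) ω))
      (fun ω => φ (fun r => M (g j r) ω)) μ := by
  classical
  set S : Finset κ := (t ×ˢ (Finset.univ : Finset ρ)).image fun p => g p.1 p.2 with hS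
  set T : Finset κ := (({j} : Finset ι) ×ˢ (Finset.univ : Finset ρ)).image
    fun p => g p.1 p.2 with hT
  have hST : Disjoint S T := by
    rw [Finset.disjoint_left]
    rintro k hkS hkT
    obtain ⟨p, hp, rfl⟩ := Finset.mem_image.1 hkS
    obtain ⟨q, hq, hqk⟩ := Finset.mem_image.1 hkT
    have hqp : q = p := hg hqk
    have h1 : p.1 ∈ t := (Finset.mem_product.1 hp).1
    have h2 : p.1 ∈ ({j} : Finset ι) := (Finset.mem_product.1 (hqp ▸ hq)).1
    rw [Finset.mem_singleton] at h2
    exact hj (h2 ▸ h1)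
  have hmemS : ∀ (i : ι), i ∈ t → ∀ (r : ρ), g i r ∈ S := fun i hi r =>
    Finset.mem_image.2 ⟨(i, r), Finset.mem_product.2 ⟨hi, Finset.mem_univ r⟩, rfl⟩
  have hmemT : ∀ (r : ρ), g j r ∈ T := fun r =>
    Finset.mem_image.2 ⟨(j, r), Finset.mem_product.2 ⟨Finset.mem_singleton_self j,
      Finset.mem_univ r⟩, rfl⟩
  set F : ({x // x ∈ S} → ℝ) → ℝ :=
    fun v => ∏ i ∈ t.attach, φ (fun r => v ⟨g i.1 r, hmemS i.1 i.2 r⟩) with hF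
  set G : ({x // x ∈ T} → ℝ) → ℝ := fun v => φ (fun r => v ⟨g j r, hmemT r⟩) with hG
  have hFm : Measurable F :=
    Finset.measurable_prod _ fun i _ =>
      hφ.comp (measurable_pi_lambda _ fun r => measurable_pi_apply _)
  have hGm : Measurable G :=
    hφ.comp (measurable_pi_lambda _ fun r => measurable_pi_apply _)
  have hind := (hIndep.indepFun_finset S T hST hM).comp hFm hGm
  have e1 : (F ∘ fun a (i : {x // x ∈ S}) => M i.1 a) =
      fun ω => ∏ i ∈ t, φ (fun r => M (g i r) ω) := by
    funext ω
    simp only [Function.comp_apply, hF]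
    exact Finset.prod_attach t fun i => φ (fun r => M (g i r) ω)
  have e2 : (G ∘ fun a (i : {x // x ∈ T}) => M i.1 a) =
      fun ω => φ (fun r => M (g j r) ω) := by
    funext ω; rfl
  rwa [e1, e2] at hind

end Aux

/-- In the constant-parameter case `ℓ(u) = ℓ•` and `v(u) = s` for all `u`, the variances
of the two combined likelihood estimators are
`Var[L̃] = (1/R)[(s + ℓ•²)^U − ℓ•^{2U}]` and `Var[L̂] = (s/R + ℓ•²)^U − ℓ•^{2U}`. -/
theorem variances_constant_parameter_case
    {Ω : Type*} [MeasurableSpace Ω] (μ : Measure Ω) [IsProbabilityMeasure μ]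
    (U R : ℕ) (hU : 1 ≤ U) (hR : 1 ≤ R)
    (L : Fin U × Fin R → Ω → ℝ) (lb s : ℝ)
    (hIndep : iIndepFun L μ)
    (hL2 : ∀ p, MemLp (L p) 2 μ)
    (hmean : ∀ p, μ[L p] = lb)
    (hvar : ∀ p, variance (L p) μ = s) :
    variance (fun ω => (1 / (R : ℝ)) * ∑ r, ∏ u, L (u, r) ω) μ =
        (1 / (R : ℝ)) * ((s + lb ^ 2) ^ U - lb ^ (2 * U)) ∧
      variance (fun ω => ∏ u : Fin U, ((1 / (R : ℝ)) * ∑ r, L (u, r) ω)) μ =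
        (s / R + lb ^ 2) ^ U - lb ^ (2 * U) := by
  classical
  have hRne : (R : ℝ) ≠ 0 := Nat.cast_ne_zero.2 (by omega)
  -- measurable modifications
  set M : Fin U × Fin R → Ω → ℝ := fun p => (hL2 p).1.mk (L p) with hMdef
  have hMeq : ∀ p, L p =ᵐ[μ] M p := fun p => (hL2 p).1.ae_eq_mk
  have hMmeas : ∀ p, Measurable (M p) :=
    fun p => (hL2 p).1.stronglyMeasurable_mk.measurable
  have hIndepM : iIndepFun M μ :=
    my_iIndepFun_ae_congr hIndep hMeq
  have hM2 : ∀ p, MemLp (M p) 2 μ := fun p => (hL2 p).ae_eq (hMeq p)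
  have hMmean : ∀ p, μ[M p] = lb := fun p => by
    rw [← integral_congr_ae (hMeq p)]; exact hmean p
  have hMvar : ∀ p, variance (M p) μ = s := fun p => by
    rw [← my_variance_congr (hMeq p)]; exact hvar p
  have hae : ∀ᵐ ω ∂μ, ∀ p, L p ω = M p ω := ae_all_iff.2 hMeq
  have hMint : ∀ p, Integrable (M p) μ := fun p => (hM2 p).integrable one_le_two
  constructor
  · -- Part 1
    have hcongr : (fun ω => (1 / (R : ℝ)) * ∑ r, ∏ u, L (u, r) ω)
        =ᵐ[μ] (fun ω => (1 / (R : ℝ)) * ∑ r, ∏ u, M (u, r) ω) := by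
      filter_upwards [hae] with ω hω
      simp only [hω]
    rw [my_variance_congr hcongr]
    set P : Fin R → Ω → ℝ := fun r ω => ∏ u, M (u, r) ω with hPdef
    -- per-column variance
    have hcol : ∀ r : Fin R, MemLp (P r) 2 μ ∧
        variance (P r) μ = ∏ _u : Fin U, (variance (M (_u, r)) μ + (μ[M (_u, r)]) ^ 2)
          - ∏ _u : Fin U, (μ[M (_u, r)]) ^ 2 := by
      intro r
      have hinj : Function.Injective
          (fun p : Fin U × Unit => ((fun (u : Fin U) (_ : Unit) => (u, r)) p.1 p.2)) := by
        intro p q h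
        have h' : (p.1, r) = (q.1, r) := h
        exact Prod.ext (Prod.mk.inj h').1 (Subsingleton.elim _ _)
      have h1 : ∀ (t : Finset (Fin U)) (j : Fin U), j ∉ t →
          IndepFun (fun ω => ∏ u ∈ t, M (u, r) ω) (M (j, r)) μ := by
        intro t j hj
        exact my_grouped_indep M hMmeas hIndepM (fun u (_ : Unit) => (u, r)) hinj
          (fun v => v Unit.unit) (measurable_pi_apply _) t j hj
      have h2 : ∀ (t : Finset (Fin U)) (j : Fin U), j ∉ t →
          IndepFun (fun ω => ∏ u ∈ t, (M (u, r) ω) ^ 2) (fun ω => (M (j, r) ω) ^ 2) μ := by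
        intro t j hj
        exact my_grouped_indep M hMmeas hIndepM (fun u (_ : Unit) => (u, r)) hinj
          (fun v => (v Unit.unit) ^ 2) ((measurable_pi_apply _).pow_const 2) t j hj
      exact my_variance_prod_indep (fun u ω => M (u, r) ω) (fun u => hM2 (u, r)) h1 h2
    have hPvar : ∀ r : Fin R, variance (P r) μ = (s + lb ^ 2) ^ U - lb ^ (2 * U) := by
      intro r
      rw [(hcol r).2]
      simp only [hMvar, hMmean, Finset.prod_const, Finset.card_univ, Fintype.card_fin]
      rw [pow_mul]
    -- pairwise independence of columns
    have hPindep : ∀ r r' : Fin R, r ≠ r' → IndepFun (P r) (P r') μ := by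
      intro r r' hne
      have hinj : Function.Injective
          (fun p : Fin R × Fin U => ((fun (rr : Fin R) (u : Fin U) => (u, rr)) p.1 p.2)) := by
        intro p q h
        have h' : (p.2, p.1) = (q.2, q.1) := h
        exact Prod.ext (Prod.mk.inj h').2 (Prod.mk.inj h').1
      have := my_grouped_indep M hMmeas hIndepM (fun (rr : Fin R) (u : Fin U) => (u, rr)) hinj
        (fun v => ∏ u, v u) (Finset.measurable_prod _ fun u _ => measurable_pi_apply u)
        {r'} r (by simpa using hne)
      simp only [Finset.prod_singleton] at this
      exact this.symm
    -- assemble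
    have hsum : variance (fun ω => ∑ r, P r ω) μ = ∑ r : Fin R, variance (P r) μ := by
      have := IndepFun.variance_sum (μ := μ) (X := P) (s := Finset.univ)
        (fun r _ => (hcol r).1) (fun r _ r' _ hne => hPindep r r' hne)
      rw [← this]
      congr 1
      funext ω
      simp [Finset.sum_apply]
    rw [variance_const_mul, hsum]
    rw [Finset.sum_congr rfl fun r _ => hPvar r]
    simp only [Finset.sum_const, Finset.card_univ, Fintype.card_fin, nsmul_eq_mul]
    field_simp
  · -- Part 2
    have hcongr : (fun ω => ∏ u : Fin U, ((1 / (R : ℝ)) * ∑ r, L (u, r) ω))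
        =ᵐ[μ] (fun ω => ∏ u : Fin U, ((1 / (R : ℝ)) * ∑ r, M (u, r) ω)) := by
      filter_upwards [hae] with ω hω
      simp only [hω]
    rw [my_variance_congr hcongr]
    set Su : Fin U → Ω → ℝ := fun u ω => (1 / (R : ℝ)) * ∑ r, M (u, r) ω with hSudef
    have hinj : Function.Injective
        (fun p : Fin U × Fin R => ((fun (u : Fin U) (r : Fin R) => (u, r)) p.1 p.2)) := by
      intro p q h; exact h
    have hSu2 : ∀ u, MemLp (Su u) 2 μ := by
      intro u
      have hsum : MemLp (fun ω => ∑ r, M (u, r) ω) 2 μ := by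
        have := memLp_finset_sum' (μ := μ) Finset.univ (f := fun r => M (u, r))
          (fun r _ => hM2 (u, r))
        have heq : (∑ r : Fin R, M (u, r)) = fun ω => ∑ r, M (u, r) ω := by
          funext ω; simp [Finset.sum_apply]
        rwa [heq] at this
      exact hsum.const_mul _
    have hφm : Measurable (fun v : Fin R → ℝ => (1 / (R : ℝ)) * ∑ r, v r) :=
      (Finset.measurable_sum _ fun r _ => measurable_pi_apply r).const_mul _
    have h1 : ∀ (t : Finset (Fin U)) (j : Fin U), j ∉ t →
        IndepFun (fun ω => ∏ u ∈ t, Su u ω) (Su j) μ := by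
      intro t j hj
      exact my_grouped_indep M hMmeas hIndepM (fun u r => (u, r)) hinj
        (fun v => (1 / (R : ℝ)) * ∑ r, v r) hφm t j hj
    have h2 : ∀ (t : Finset (Fin U)) (j : Fin U), j ∉ t →
        IndepFun (fun ω => ∏ u ∈ t, (Su u ω) ^ 2) (fun ω => (Su j ω) ^ 2) μ := by
      intro t j hj
      exact my_grouped_indep M hMmeas hIndepM (fun u r => (u, r)) hinj
        (fun v => ((1 / (R : ℝ)) * ∑ r, v r) ^ 2) (hφm.pow_const 2) t j hj
    obtain ⟨-, hvarprod⟩ := my_variance_prod_indep Su hSu2 h1 h2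
    -- mean of Su
    have hSumean : ∀ u, ∫ ω, Su u ω ∂μ = lb := by
      intro u
      rw [hSudef]
      simp only
      rw [integral_const_mul, integral_finset_sum _ fun r _ => hMint (u, r)]
      rw [Finset.sum_congr rfl fun r _ => hMmean (u, r)]
      simp only [Finset.sum_const, Finset.card_univ, Fintype.card_fin, nsmul_eq_mul]
      field_simp
    -- variance of Su
    have hSuvar : ∀ u, variance (Su u) μ = s / R := by
      intro u
      rw [hSudef]
      simp only
      rw [variance_const_mul]
      have hsum : variance (fun ω => ∑ r, M (u, r) ω) μ
          = ∑ r : Fin R, variance (M (u, r)) μ := by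
        have := IndepFun.variance_sum (μ := μ) (X := fun r => M (u, r)) (s := Finset.univ)
          (fun r _ => hM2 (u, r))
          (fun r _ r' _ hne => hIndepM.indepFun (by simp [Prod.ext_iff, hne]))
        rw [← this]
        congr 1
        funext ω
        simp [Finset.sum_apply]
      rw [hsum, Finset.sum_congr rfl fun r _ => hMvar (u, r)]
      simp only [Finset.sum_const, Finset.card_univ, Fintype.card_fin, nsmul_eq_mul]
      field_simp
    rw [hvarprod]
    simp only [hSuvar, hSumean, Finset.prod_const, Finset.card_univ, Fintype.card_fin]
    rw [pow_mul]
end
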